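/- Naive approach composite bound: let (Ω,P) be a probability space with random variables G, Ĝ into finite set 𝒢 and Z into a measurable space, with P(G=j) = P(Ĝ=j) > 0 and P(G ≠ Ĝ | G = j) ≤ γ_j for each j ∈ 𝒢. Let h be measurable with oscillation at most 1 (|h(z₁) − h(z₂)| ≤ 1). If E[h(Z) | Ĝ = j] ≤ 0 for all j, then E[h(Z) | G = j] ≤ γ_j for all j. -/

import Mathlib

open MeasureTheory ProbabilityTheory

/-- Naive approach composite bound: if the marginal group probabilities match,
the group-label noise is bounded by γ_j, h has oscillation at most 1, and the
fairness constraints hold conditionally on the noisy groups, then the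
constraints hold conditionally on the true groups within slack γ_j. -/
theorem naive_composite_bound {Ω 𝒢 X : Type*} [MeasurableSpace Ω]
    [MeasurableSpace 𝒢] [MeasurableSingletonClass 𝒢] [Fintype 𝒢]
    [MeasurableSpace X]
    (P : Measure Ω) [IsProbabilityMeasure P]
    (G G' : Ω → 𝒢) (hG : Measurable G) (hG' : Measurable G')
    (Z : Ω → X) (hZ : Measurable Z)
    (h : X → ℝ) (hmeas : Measurable h) (hosc : ∀ z₁ z₂, |h z₁ - h z₂| ≤ 1)
    (γ : 𝒢 → ℝ)
    (heq : ∀ j, P (G ⁻¹' {j}) = P (G' ⁻¹' {j}))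
    (hpos : ∀ j, 0 < P (G ⁻¹' {j}))
    (hnoise : ∀ j, ((P[|G ⁻¹' {j}]) {ω | G ω ≠ G' ω}).toReal ≤ γ j)
    (hfair : ∀ j, ∫ ω, h (Z ω) ∂(P[|G' ⁻¹' {j}]) ≤ 0) :
    ∀ j, ∫ ω, h (Z ω) ∂(P[|G ⁻¹' {j}]) ≤ γ j := by
  intro j
  set A := G ⁻¹' {j} with hAdef
  set B := G' ⁻¹' {j} with hBdef
  set S := {ω | G ω ≠ G' ω} with hSdef
  have hA : MeasurableSet A := hG (measurableSet_singleton j)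
  have hB : MeasurableSet B := hG' (measurableSet_singleton j)
  have hPA := hpos j
  have hPAB : P A = P B := heq j
  obtain ⟨ω₀, hω₀⟩ : A.Nonempty := nonempty_of_measure_ne_zero hPA.ne'
  haveI : Nonempty X := ⟨Z ω₀⟩
  set c : ℝ := ⨅ z, h z with hc
  have hbdd : BddBelow (Set.range h) := by
    refine ⟨h (Z ω₀) - 1, ?_⟩
    rintro _ ⟨z, rfl⟩
    have := abs_le.mp (hosc (Z ω₀) z)
    linarith [this.1]
  have hcle : ∀ z, c ≤ h z := fun z => ciInf_le hbdd z
  have hlec : ∀ z, h z - 1 ≤ c := by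
    intro z
    refine le_ciInf fun z' => ?_
    have := abs_le.mp (hosc z z')
    linarith [this.1]
  set f : Ω → ℝ := fun ω => h (Z ω) with hf
  have hfmeas : Measurable f := hmeas.comp hZ
  have hfbound : ∀ ω, ‖f ω‖ ≤ |c| + 1 := by
    intro ω
    have h1 := hcle (Z ω); have h2 := hlec (Z ω)
    rw [Real.norm_eq_abs, abs_le]
    constructor
    · linarith [neg_abs_le c]
    · linarith [le_abs_self c]
  have hfint : Integrable f P :=
    (integrable_const (|c| + 1)).mono' hfmeas.aestronglyMeasurable (ae_of_all _ hfbound)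
  set g : Ω → ℝ := fun ω => f ω - c with hg
  have hgint : Integrable g P := hfint.sub (integrable_const c)
  have hg0 : ∀ ω, 0 ≤ g ω := fun ω => by
    have := hcle (Z ω); simp only [hg, hf]; linarith
  have hg1 : ∀ ω, g ω ≤ 1 := fun ω => by
    have := hlec (Z ω); simp only [hg, hf]; linarith
  -- measure of symmetric differences are equal
  have hmeq : P (A \ B) = P (B \ A) := by
    have h1 : P (A ∩ B) + P (A \ B) = P A := by
      rw [← measure_union (Set.disjoint_left.mpr fun x hx hx' => hx'.2 hx.2) (hA.diff hB),
        Set.inter_union_diff]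
    have h2 : P (A ∩ B) + P (B \ A) = P B := by
      rw [← measure_union (Set.disjoint_left.mpr fun x hx hx' => hx'.2 hx.1) (hB.diff hA)]
      rw [show A ∩ B ∪ B \ A = B by rw [Set.inter_comm, Set.inter_union_diff]]
    have h3 : P (A ∩ B) + P (A \ B) = P (A ∩ B) + P (B \ A) := by
      rw [h1, h2, hPAB]
    exact (ENNReal.add_right_inj (measure_ne_top P _)).mp h3
  -- split integrals
  have hsplit : ∀ (s t : Set Ω), MeasurableSet s → MeasurableSet t →
      ∫ ω in s, f ω ∂P = ∫ ω in s ∩ t, f ω ∂P + ∫ ω in s \ t, f ω ∂P := by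
    intro s t hs ht
    rw [← setIntegral_union (Set.disjoint_left.mpr fun x hx hx' => hx'.2 hx.2) (hs.diff ht)
      hfint.integrableOn hfint.integrableOn, Set.inter_union_diff]
  have hsplitA := hsplit A B hA hB
  have hsplitB := hsplit B A hB hA
  rw [Set.inter_comm] at hsplitB
  -- rewrite diff integrals via g
  have hdiff : ∀ (s : Set Ω), ∫ ω in s, f ω ∂P = ∫ ω in s, g ω ∂P + (P s).toReal * c := by
    intro s
    have hgs : ∫ ω in s, g ω ∂P = ∫ ω in s, f ω ∂P - (P s).toReal * c := by
      simp only [hg]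
      rw [integral_sub hfint.integrableOn (integrable_const c).integrableOn,
        setIntegral_const, smul_eq_mul, measureReal_def]
    linarith
  have hub : ∫ ω in A \ B, g ω ∂P ≤ (P (A \ B)).toReal := by
    calc ∫ ω in A \ B, g ω ∂P ≤ ∫ ω in A \ B, (1 : ℝ) ∂P :=
          setIntegral_mono hgint.integrableOn (integrable_const 1).integrableOn hg1
      _ = (P (A \ B)).toReal := by rw [setIntegral_const, smul_eq_mul, mul_one, measureReal_def]
  have hlb : 0 ≤ ∫ ω in B \ A, g ω ∂P :=
    setIntegral_nonneg (hB.diff hA) (fun ω _ => hg0 ω)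
  have hABle : ∫ ω in A, f ω ∂P ≤ ∫ ω in B, f ω ∂P + (P (A \ B)).toReal := by
    have e1 := hdiff (A \ B)
    have e2 := hdiff (B \ A)
    have hmr : (P (A \ B)).toReal * c = (P (B \ A)).toReal * c := by rw [hmeq]
    rw [hsplitA, hsplitB]
    linarith
  -- A \ B ⊆ A ∩ S
  have hsub : A \ B ⊆ A ∩ S := by
    rintro ω ⟨h1, h2⟩
    refine ⟨h1, fun heqω => h2 ?_⟩
    have hGj : G ω = j := h1
    simp only [hBdef, Set.mem_preimage, Set.mem_singleton_iff, ← heqω]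
    exact hGj
  have hsubR : (P (A \ B)).toReal ≤ (P (A ∩ S)).toReal :=
    ENNReal.toReal_mono (measure_ne_top P _) (measure_mono hsub)
  -- conditional integral formula
  have hcondInt : ∀ (s : Set Ω), ∫ ω, f ω ∂(P[|s]) = ((P s).toReal)⁻¹ * ∫ ω in s, f ω ∂P := by
    intro s
    rw [ProbabilityTheory.cond, integral_smul_measure, ENNReal.toReal_inv, smul_eq_mul]
  have hBpos : 0 < (P B).toReal :=
    ENNReal.toReal_pos (hPAB ▸ hPA.ne') (measure_ne_top P B)
  have hApos : 0 < (P A).toReal := ENNReal.toReal_pos hPA.ne' (measure_ne_top P A)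
  have hBint : ∫ ω in B, f ω ∂P ≤ 0 := by
    have hfj := hfair j
    rw [hcondInt B] at hfj
    by_contra hcon
    push_neg at hcon
    exact absurd hfj (not_le.mpr (mul_pos (inv_pos.mpr hBpos) hcon))
  have hnj := hnoise j
  rw [cond_apply hA, ENNReal.toReal_mul, ENNReal.toReal_inv] at hnj
  have hgoal : ((P A).toReal)⁻¹ * ∫ ω in A, f ω ∂P ≤ γ j := by
    calc ((P A).toReal)⁻¹ * ∫ ω in A, f ω ∂P
        ≤ ((P A).toReal)⁻¹ * (P (A ∩ S)).toReal := by
          apply mul_le_mul_of_nonneg_left _ (inv_nonneg.mpr hApos.le)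
          calc ∫ ω in A, f ω ∂P ≤ ∫ ω in B, f ω ∂P + (P (A \ B)).toReal := hABle
            _ ≤ (P (A ∩ S)).toReal := by linarith
      _ ≤ γ j := hnj
  rw [hcondInt A]
  exact hgoal
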